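/- arXiv:1402.4855 — 3 statements merged into one kernel-verified Lean document; each statement's English description precedes it below -/
import Mathlib

section
/- If a point x satisfies ‖x − a‖ ≤ min(‖a − w‖, ‖a − p‖) for some point a on the segment from w to p, then x lies in the closed disk with diameter segment wp. -/
theorem stmt_2 (w p x a : EuclideanSpace ℝ (Fin 2))
    (ha : a ∈ segment ℝ w p)
    (hx : dist x a ≤ min (dist a w) (dist a p)) :
    dist x (midpoint ℝ w p) ≤ dist w p / 2 := by
  obtain ⟨u, v, hu, hv, huv, rfl⟩ := ha
  have hu' : u = 1 - v := by linarith
  subst hu'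
  set d : ℝ := dist w p with hd
  have hd0 : 0 ≤ d := dist_nonneg
  have h1 : dist ((1 - v) • w + v • p) w = v * d := by
    rw [dist_eq_norm]
    have he : (1 - v) • w + v • p - w = v • (p - w) := by module
    rw [he, norm_smul, Real.norm_of_nonneg hv, hd, dist_eq_norm, norm_sub_rev]
  have h2 : dist ((1 - v) • w + v • p) p = (1 - v) * d := by
    rw [dist_eq_norm]
    have he : (1 - v) • w + v • p - p = (1 - v) • (w - p) := by module
    rw [he, norm_smul, Real.norm_of_nonneg hu, hd, dist_eq_norm]
  have h3 : dist ((1 - v) • w + v • p) (midpoint ℝ w p) = |v - 1/2| * d := by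
    rw [dist_eq_norm, midpoint_eq_smul_add, invOf_eq_inv]
    have he : (1 - v) • w + v • p - (2⁻¹ : ℝ) • (w + p) = (v - 1/2) • (p - w) := by
      module
    rw [he, norm_smul, Real.norm_eq_abs, hd, dist_eq_norm, norm_sub_rev]
  have tri := dist_triangle x ((1 - v) • w + v • p) (midpoint ℝ w p)
  rw [h1, h2] at hx
  rw [h3] at tri
  rcases le_total v (1/2) with h | h
  · have hmin : min (v * d) ((1 - v) * d) = v * d := by
      apply min_eq_left; nlinarith
    rw [hmin] at hx
    rw [abs_of_nonpos (by linarith)] at tri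
    nlinarith
  · have hmin : min (v * d) ((1 - v) * d) = (1 - v) * d := by
      apply min_eq_right; nlinarith
    rw [hmin] at hx
    rw [abs_of_nonneg (by linarith)] at tri
    nlinarith
end

section
/- Let P be a finite set of points in the plane, s ∈ P, p ∈ P with d(s,p) = i ≥ 1 (graph distance in the unit disk graph G(P)), and let w be a point of P with d(s,w) = i − 1 minimizing the Euclidean distance ‖w − p‖ among all such points. Then ‖w − p‖ ≤ 1, and every point x ∈ P lying in the closed disk with diameter wp satisfies d(s,x) ∈ {i−1, i}; moreover if x ≠ w lies strictly closer to p than w does, then d(s,x) = i. -/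
/-- The unit disk graph on a finite set of points in the plane:
distinct points are adjacent iff their Euclidean distance is at most 1. -/
noncomputable def unitDiskGraph (P : Finset (EuclideanSpace ℝ (Fin 2))) :
    SimpleGraph P :=
  SimpleGraph.fromRel (fun p q => dist (p : EuclideanSpace ℝ (Fin 2)) q ≤ 1)

lemma udg_adj {P : Finset (EuclideanSpace ℝ (Fin 2))} {a b : P}
    (hne : a ≠ b) (h : dist (a : EuclideanSpace ℝ (Fin 2)) b ≤ 1) :
    (unitDiskGraph P).Adj a b := by
  exact ⟨hne, Or.inl h⟩

lemma udg_adj_dist {P : Finset (EuclideanSpace ℝ (Fin 2))} {a b : P}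
    (h : (unitDiskGraph P).Adj a b) :
    dist (a : EuclideanSpace ℝ (Fin 2)) b ≤ 1 := by
  rcases h with ⟨_, h | h⟩
  · exact h
  · rwa [dist_comm]

lemma dist_le_concat {V : Type*} {G : SimpleGraph V} {s x p : V}
    (hr : G.Reachable s x) (h : G.Adj x p) :
    G.dist s p ≤ G.dist s x + 1 := by
  obtain ⟨W, hW⟩ := hr.exists_walk_length_eq_dist
  have := SimpleGraph.dist_le (W.concat h)
  rwa [SimpleGraph.Walk.length_concat, hW] at this

theorem stmt_7 (P : Finset (EuclideanSpace ℝ (Fin 2))) (s p w : P) (i : ℕ) (hi : 1 ≤ i)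
    (hreach : (unitDiskGraph P).Reachable s p)
    (hdp : (unitDiskGraph P).dist s p = i)
    (hwreach : (unitDiskGraph P).Reachable s w)
    (hdw : (unitDiskGraph P).dist s w + 1 = i)
    (hmin : ∀ w' : P, (unitDiskGraph P).Reachable s w' → (unitDiskGraph P).dist s w' + 1 = i →
      dist (w : EuclideanSpace ℝ (Fin 2)) p ≤ dist (w' : EuclideanSpace ℝ (Fin 2)) p) :
    dist (w : EuclideanSpace ℝ (Fin 2)) p ≤ 1 ∧
    (∀ x : P,
      dist (x : EuclideanSpace ℝ (Fin 2)) (midpoint ℝ (w : EuclideanSpace ℝ (Fin 2)) p)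
        ≤ dist (w : EuclideanSpace ℝ (Fin 2)) p / 2 →
      ((unitDiskGraph P).dist s x = i - 1 ∨ (unitDiskGraph P).dist s x = i) ∧
      (x ≠ w → dist (x : EuclideanSpace ℝ (Fin 2)) p < dist (w : EuclideanSpace ℝ (Fin 2)) p →
        (unitDiskGraph P).dist s x = i)) := by
  set G := unitDiskGraph P
  -- find a predecessor v of p on a shortest path
  obtain ⟨W, hW⟩ := hreach.exists_walk_length_eq_dist
  have hWlen : W.length = i := by rw [hW, hdp]
  -- W.reverse : Walk p s, nonempty since i ≥ 1
  have hwp1 : dist (w : EuclideanSpace ℝ (Fin 2)) p ≤ 1 := by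
    cases hWr : W.reverse with
    | nil =>
        exfalso
        have : W.reverse.length = 0 := by rw [hWr]; rfl
        rw [SimpleGraph.Walk.length_reverse, hWlen] at this
        omega
    | cons h q =>
        rename_i v
        -- h : G.Adj p v, q : Walk v s
        have hqlen : q.length = i - 1 := by
          have : W.reverse.length = q.length + 1 := by rw [hWr]; rfl
          rw [SimpleGraph.Walk.length_reverse, hWlen] at this
          omega
        have hvr : G.Reachable s v := (q.reverse).reachable
        have hle : G.dist s v ≤ i - 1 := by
          have := SimpleGraph.dist_le q.reverse
          rwa [SimpleGraph.Walk.length_reverse, hqlen] at this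
        have hge : i ≤ G.dist s v + 1 := by
          have := dist_le_concat hvr h.symm
          omega
        have hveq : G.dist s v + 1 = i := by omega
        have := hmin v hvr hveq
        have hvp : dist (v : EuclideanSpace ℝ (Fin 2)) p ≤ 1 := by
          have := udg_adj_dist h
          rwa [dist_comm] at this
        linarith
  refine ⟨hwp1, fun x hx => ?_⟩
  -- x is within dist(w,p) of both w and p
  have hxw : dist (x : EuclideanSpace ℝ (Fin 2)) w ≤ dist (w : EuclideanSpace ℝ (Fin 2)) p := by
    have h1 := dist_triangle (x : EuclideanSpace ℝ (Fin 2))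
      (midpoint ℝ (w : EuclideanSpace ℝ (Fin 2)) p) w
    have h2 : dist (midpoint ℝ (w : EuclideanSpace ℝ (Fin 2)) p) (w : EuclideanSpace ℝ (Fin 2))
        = dist (w : EuclideanSpace ℝ (Fin 2)) p / 2 := by
      rw [dist_midpoint_left (𝕜 := ℝ)]
      norm_num
      ring
    linarith
  have hxp : dist (x : EuclideanSpace ℝ (Fin 2)) p ≤ dist (w : EuclideanSpace ℝ (Fin 2)) p := by
    have h1 := dist_triangle (x : EuclideanSpace ℝ (Fin 2))
      (midpoint ℝ (w : EuclideanSpace ℝ (Fin 2)) p) p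
    have h2 : dist (midpoint ℝ (w : EuclideanSpace ℝ (Fin 2)) p) (p : EuclideanSpace ℝ (Fin 2))
        = dist (w : EuclideanSpace ℝ (Fin 2)) p / 2 := by
      rw [dist_midpoint_right (𝕜 := ℝ)]
      norm_num
      ring
    linarith
  -- upper bound: d(s,x) ≤ i
  have hxle : G.dist s x ≤ i := by
    by_cases hxw' : x = w
    · subst hxw'; omega
    · have hadj : G.Adj w x := (udg_adj (Ne.symm hxw') (by rw [dist_comm]; linarith)).symm.symm
      have := dist_le_concat hwreach hadj
      omega
  have hxreach : G.Reachable s x := by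
    by_cases hxw' : x = w
    · subst hxw'; exact hwreach
    · have hadj : G.Adj w x := udg_adj (Ne.symm hxw') (by rw [dist_comm]; linarith)
      exact hwreach.trans hadj.reachable
  -- lower bound: d(s,x) ≥ i - 1
  have hxge : i - 1 ≤ G.dist s x := by
    by_cases hxp' : x = p
    · subst hxp'; omega
    · have hadj : G.Adj x p := udg_adj hxp' (by linarith)
      have := dist_le_concat hxreach hadj
      omega
  refine ⟨by omega, fun hne hlt => ?_⟩
  by_contra hcon
  have hxeq : G.dist s x + 1 = i := by omega
  have := hmin x hxreach hxeq
  linarith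
end

section
/- Let P be a finite set of points in the plane, s ∈ P, and d the graph distance in the unit disk graph G(P). For any point p with d(s,p) = i ≥ 1 and any point x on the straight segment from w to p, where w ∈ P satisfies d(s,w) = i − 1 and ‖w − p‖ ≤ 1: any q ∈ P whose Euclidean distance to x is at most min(‖x − w‖, ‖x − p‖) satisfies i − 1 ≤ d(s,q) ≤ i. -/
theorem stmt_14 (P : Finset (EuclideanSpace ℝ (Fin 2))) (s p w : P) (i : ℕ) (hi : 1 ≤ i)
    (hreach : (unitDiskGraph P).Reachable s p)
    (hdp : (unitDiskGraph P).dist s p = i)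
    (hwreach : (unitDiskGraph P).Reachable s w)
    (hdw : (unitDiskGraph P).dist s w + 1 = i)
    (hwp : dist (w : EuclideanSpace ℝ (Fin 2)) p ≤ 1)
    (x : EuclideanSpace ℝ (Fin 2))
    (hx : x ∈ segment ℝ (w : EuclideanSpace ℝ (Fin 2)) (p : EuclideanSpace ℝ (Fin 2)))
    (q : P)
    (hq : dist (q : EuclideanSpace ℝ (Fin 2)) x ≤
      min (dist x (w : EuclideanSpace ℝ (Fin 2))) (dist x (p : EuclideanSpace ℝ (Fin 2)))) :
    i ≤ (unitDiskGraph P).dist s q + 1 ∧ (unitDiskGraph P).dist s q ≤ i := by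
  have hseg : dist (w : EuclideanSpace ℝ (Fin 2)) x + dist x (p : EuclideanSpace ℝ (Fin 2))
      = dist (w : EuclideanSpace ℝ (Fin 2)) p := dist_add_dist_of_mem_segment hx
  have hq1 : dist (q : EuclideanSpace ℝ (Fin 2)) x ≤ dist x (w : EuclideanSpace ℝ (Fin 2)) :=
    le_trans hq (min_le_left _ _)
  have hq2 : dist (q : EuclideanSpace ℝ (Fin 2)) x ≤ dist x (p : EuclideanSpace ℝ (Fin 2)) :=
    le_trans hq (min_le_right _ _)
  have hqw : dist (q : EuclideanSpace ℝ (Fin 2)) w ≤ 1 := by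
    calc dist (q : EuclideanSpace ℝ (Fin 2)) w
        ≤ dist (q : EuclideanSpace ℝ (Fin 2)) x + dist x (w : EuclideanSpace ℝ (Fin 2)) :=
          dist_triangle _ _ _
      _ ≤ dist x (p : EuclideanSpace ℝ (Fin 2)) + dist x (w : EuclideanSpace ℝ (Fin 2)) := by
          linarith
      _ ≤ 1 := by rw [dist_comm x (w : EuclideanSpace ℝ (Fin 2))] at *; linarith
  have hqp : dist (q : EuclideanSpace ℝ (Fin 2)) p ≤ 1 := by
    calc dist (q : EuclideanSpace ℝ (Fin 2)) p
        ≤ dist (q : EuclideanSpace ℝ (Fin 2)) x + dist x (p : EuclideanSpace ℝ (Fin 2)) :=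
          dist_triangle _ _ _
      _ ≤ dist x (w : EuclideanSpace ℝ (Fin 2)) + dist x (p : EuclideanSpace ℝ (Fin 2)) := by
          linarith
      _ ≤ 1 := by rw [dist_comm x (w : EuclideanSpace ℝ (Fin 2))] at *; linarith
  -- adjacency helper
  have hadjw : q ≠ w → (unitDiskGraph P).Adj q w := fun hne => by
    simp only [unitDiskGraph, SimpleGraph.fromRel_adj]
    exact ⟨hne, Or.inl hqw⟩
  have hadjp : q ≠ p → (unitDiskGraph P).Adj q p := fun hne => by
    simp only [unitDiskGraph, SimpleGraph.fromRel_adj]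
    exact ⟨hne, Or.inl hqp⟩
  -- upper bound: dist s q ≤ i
  have hupper : (unitDiskGraph P).dist s q ≤ i := by
    by_cases hne : q = w
    · subst hne; omega
    · obtain ⟨W, hW⟩ := hwreach.exists_walk_length_eq_dist
      have := SimpleGraph.dist_le (W.concat (hadjw hne).symm)
      rw [SimpleGraph.Walk.length_concat, hW] at this
      omega
  refine ⟨?_, hupper⟩
  -- lower bound: i ≤ dist s q + 1
  by_cases hne : q = p
  · subst hne; omega
  · have hqreach : (unitDiskGraph P).Reachable s q := by
      by_cases hne2 : q = w
      · subst hne2; exact hwreach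
      · exact hwreach.trans ⟨(SimpleGraph.Walk.cons (hadjw hne2).symm SimpleGraph.Walk.nil)⟩
    obtain ⟨W, hW⟩ := hqreach.exists_walk_length_eq_dist
    have := SimpleGraph.dist_le (W.concat (hadjp hne))
    rw [SimpleGraph.Walk.length_concat, hW, hdp] at this
    omega
end
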